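/- Let η < 0 and let σ_η^{(t)}(l) = sinh(t l √(−η))/sinh(l √(−η)) for l > 0 and σ_η^{(t)}(0) = t. Let u : [0,1] → [0, ∞) be a function on a geodesic parameter interval satisfying the σ-concavity inequality u(1/2) ≥ σ_η^{(1/2)}(l) u(0) + σ_η^{(1/2)}(l) u(1) for the restriction of u to every subinterval (with l the length of that subinterval), and suppose u satisfies this midpoint inequality for all subintervals. Then u satisfies the full inequality u(t) ≥ σ_η^{(1−t)}(l) u(0) + σ_η^{(t)}(l) u(1) for all t ∈ [0,1], provided u is lower semicontinuous. -/

import Mathlib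

open Set Real Filter

/-- The distortion coefficient `σ_η^{(t)}(l)` for `η < 0`:
`sinh(t·l·√(−η))/sinh(l·√(−η))` for `l > 0`, and `t` for `l = 0`. -/
noncomputable def sigEta (η t l : ℝ) : ℝ :=
  if l = 0 then t else Real.sinh (t * (l * Real.sqrt (-η))) / Real.sinh (l * Real.sqrt (-η))

/-- Normalized coefficient as a function of `k = l·√(−η)`. -/
noncomputable def sK (k t : ℝ) : ℝ :=
  if k = 0 then t else Real.sinh (t * k) / Real.sinh k

lemma sK_zero (k : ℝ) : sK k 0 = 0 := by
  unfold sK; split <;> simp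

lemma sK_one (k : ℝ) : sK k 1 = 1 := by
  unfold sK; split
  · rfl
  · rw [one_mul, div_self (Real.sinh_ne_zero.2 (by assumption))]

lemma sK_cont (k : ℝ) : Continuous (sK k) := by
  unfold sK; split
  · exact continuous_id
  · exact (Real.continuous_sinh.comp (continuous_id.mul continuous_const)).div_const _

lemma sK_add (k x y : ℝ) :
    sK k x + sK k y = 2 * Real.cosh ((x - y) * k / 2) * sK k ((x + y) / 2) := by
  unfold sK; split
  · rename_i hk; subst hk; simp; ring
  · rename_i hk
    have hs : Real.sinh k ≠ 0 := Real.sinh_ne_zero.2 hk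
    rw [← add_div, show x * k = (x + y) / 2 * k + (x - y) * k / 2 by ring,
      show y * k = (x + y) / 2 * k - (x - y) * k / 2 by ring,
      Real.sinh_add, Real.sinh_sub]
    field_simp
    ring

lemma sigEta_eq_sK {η : ℝ} (hη : η < 0) (t l : ℝ) :
    sigEta η t l = sK (l * Real.sqrt (-η)) t := by
  have hr : 0 < Real.sqrt (-η) := Real.sqrt_pos.2 (by linarith)
  unfold sigEta sK
  by_cases hl : l = 0
  · simp [hl]
  · rw [if_neg hl, if_neg (mul_ne_zero hl hr.ne')]

lemma sigEta_half {η : ℝ} (hη : η < 0) (l : ℝ) :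
    sigEta η (1/2) l = 1 / (2 * Real.cosh (l * Real.sqrt (-η) / 2)) := by
  rw [sigEta_eq_sK hη]
  set k := l * Real.sqrt (-η) with hk
  unfold sK
  split
  · rename_i h; rw [h]; norm_num
  · rename_i h
    have h2 : Real.sinh (k / 2) ≠ 0 := Real.sinh_ne_zero.2 (by
      intro hc; apply h; linarith [hc])
    have hsk : Real.sinh k = 2 * Real.sinh (k / 2) * Real.cosh (k / 2) := by
      rw [show k = 2 * (k / 2) by ring, Real.sinh_two_mul]
      ring_nf
    rw [show (1:ℝ)/2 * k = k / 2 by ring, hsk]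
    have hc : Real.cosh (k / 2) ≠ 0 := (Real.cosh_pos _).ne'
    field_simp

/-- Midpoint `σ`-concavity on all subintervals, together with lower semicontinuity, upgrades
to full `σ`-concavity: if `u : [0,1] → [0,∞)` (on a geodesic of length `L`) satisfies
`u((a+b)/2) ≥ σ_η^{(1/2)}((b−a)L)·u(a) + σ_η^{(1/2)}((b−a)L)·u(b)` for every subinterval
`[a,b] ⊆ [0,1]`, then `u(t) ≥ σ_η^{(1−t)}(L)·u(0) + σ_η^{(t)}(L)·u(1)` for all `t ∈ [0,1]`. -/
theorem sigma_concavity_of_midpoint (η : ℝ) (hη : η < 0) (L : ℝ) (hL : 0 ≤ L)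
    (u : ℝ → ℝ)
    (hnn : ∀ t ∈ Icc (0:ℝ) 1, 0 ≤ u t)
    (hlsc : LowerSemicontinuousOn u (Icc (0:ℝ) 1))
    (hmid : ∀ a b : ℝ, 0 ≤ a → a ≤ b → b ≤ 1 →
      sigEta η (1/2) ((b - a) * L) * u a + sigEta η (1/2) ((b - a) * L) * u b ≤
        u ((a + b) / 2)) :
    ∀ t ∈ Icc (0:ℝ) 1, sigEta η (1 - t) L * u 0 + sigEta η t L * u 1 ≤ u t := by
  have hr : 0 < Real.sqrt (-η) := Real.sqrt_pos.2 (by linarith)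
  set K : ℝ := L * Real.sqrt (-η) with hKdef
  set B : ℝ → ℝ := fun t => sK K (1 - t) * u 0 + sK K t * u 1 with hBdef
  have u0 : 0 ≤ u 0 := hnn 0 ⟨le_refl 0, zero_le_one⟩
  have u1 : 0 ≤ u 1 := hnn 1 ⟨zero_le_one, le_refl 1⟩
  set Good : ℝ → Prop := fun x => 0 ≤ x ∧ x ≤ 1 ∧ B x ≤ u x with hGood
  have good0 : Good 0 := by
    refine ⟨le_refl 0, zero_le_one, ?_⟩
    simp [hBdef, sK_zero, sK_one]
  have good1 : Good 1 := by
    refine ⟨zero_le_one, le_refl 1, ?_⟩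
    simp [hBdef, sK_zero, sK_one]
  -- the half coefficient, rewritten
  have hhalf : ∀ a b : ℝ, sigEta η (1/2) ((b - a) * L) = 1 / (2 * Real.cosh ((b - a) * K / 2)) := by
    intro a b
    rw [sigEta_half hη]
    congr 2
    rw [hKdef]; ring
  -- midpoint closure of Good
  have hmidG : ∀ a b : ℝ, Good a → Good b → a ≤ b → Good ((a + b) / 2) := by
    rintro a b ⟨ha0, ha1, hBa⟩ ⟨hb0, hb1, hBb⟩ hab
    refine ⟨by linarith, by linarith, ?_⟩
    have hm := hmid a b ha0 hab hb1
    rw [hhalf a b] at hm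
    set z := (b - a) * K / 2 with hz
    have hcz : 0 < Real.cosh z := Real.cosh_pos z
    have hc : 0 < 1 / (2 * Real.cosh z) := by positivity
    have e1 : sK K (1 - a) + sK K (1 - b) = 2 * Real.cosh z * sK K (1 - (a + b) / 2) := by
      have h := sK_add K (1 - a) (1 - b)
      rw [show (1:ℝ) - a - (1 - b) = b - a by ring,
        show ((1:ℝ) - a + (1 - b)) / 2 = 1 - (a + b) / 2 by ring] at h
      rw [h, hz]
    have e2 : sK K a + sK K b = 2 * Real.cosh z * sK K ((a + b) / 2) := by
      have h := sK_add K b a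
      rw [show ((b:ℝ) + a) / 2 = (a + b) / 2 by ring] at h
      rw [hz]
      linarith [h]
    have eB : B ((a + b) / 2) = 1 / (2 * Real.cosh z) * (B a + B b) := by
      simp only [hBdef]
      rw [show sK K (1 - a) * u 0 + sK K a * u 1 + (sK K (1 - b) * u 0 + sK K b * u 1)
          = (sK K (1 - a) + sK K (1 - b)) * u 0 + (sK K a + sK K b) * u 1 by ring, e1, e2]
      field_simp
    have step : 1 / (2 * Real.cosh z) * (B a + B b) ≤ 1 / (2 * Real.cosh z) * (u a + u b) := by
      apply mul_le_mul_of_nonneg_left (by linarith) hc.le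
    calc B ((a + b) / 2) = 1 / (2 * Real.cosh z) * (B a + B b) := eB
      _ ≤ 1 / (2 * Real.cosh z) * (u a + u b) := step
      _ = 1 / (2 * Real.cosh z) * u a + 1 / (2 * Real.cosh z) * u b := by ring
      _ ≤ u ((a + b) / 2) := hm
  -- dyadic rationals are Good
  have hdy : ∀ n k : ℕ, k ≤ 2 ^ n → Good ((k : ℝ) / 2 ^ n) := by
    intro n
    induction n with
    | zero =>
      intro k hk
      interval_cases k
      · simpa using good0
      · simpa using good1
    | succ n ih =>
      intro k hk
      have h2n : (2:ℕ) ^ (n + 1) = 2 * 2 ^ n := by ring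
      have hpow : (0:ℝ) < 2 ^ n := by positivity
      rcases Nat.even_or_odd k with ⟨j, hj⟩ | ⟨j, hj⟩
      · have hj' : j ≤ 2 ^ n := by omega
        have : ((k : ℝ) / 2 ^ (n + 1)) = (j : ℝ) / 2 ^ n := by
          subst hj; push_cast; rw [pow_succ]; field_simp; ring
        rw [this]; exact ih j hj'
      · have hj1 : j + 1 ≤ 2 ^ n := by omega
        have hg1 := ih j (by omega)
        have hg2 := ih (j + 1) hj1
        have hle : (j : ℝ) / 2 ^ n ≤ ((j + 1 : ℕ) : ℝ) / 2 ^ n := by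
          gcongr
          push_cast; linarith
        have hgm := hmidG _ _ hg1 hg2 hle
        have heq : ((j : ℝ) / 2 ^ n + ((j + 1 : ℕ) : ℝ) / 2 ^ n) / 2 = (k : ℝ) / 2 ^ (n + 1) := by
          subst hj; push_cast; rw [pow_succ]; field_simp; ring
        rwa [heq] at hgm
  -- main part
  intro t ht
  obtain ⟨ht0, ht1⟩ := ht
  rw [sigEta_eq_sK hη, sigEta_eq_sK hη, ← hKdef]
  show B t ≤ u t
  rcases eq_or_lt_of_le ht1 with h1 | h1
  · rw [h1]; exact good1.2.2
  -- t < 1 : approximate from the left by dyadics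
  set p : ℕ → ℝ := fun n => ((⌊t * 2 ^ n⌋₊ : ℕ) : ℝ) / 2 ^ n with hp
  have hpow : ∀ n : ℕ, (0:ℝ) < 2 ^ n := fun n => by positivity
  have hple : ∀ n, p n ≤ t := by
    intro n
    rw [hp]
    rw [div_le_iff₀ (hpow n)]
    exact Nat.floor_le (by positivity)
  have hplt : ∀ n, t - (1/2) ^ n ≤ p n := by
    intro n
    have := Nat.lt_floor_add_one (t * 2 ^ n)
    rw [hp]
    rw [div_pow, one_pow, sub_le_iff_le_add, ← sub_le_iff_le_add']
    rw [sub_div' (hpow n).ne']  -- maybe not needed; do directly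
    rw [div_le_div_iff₀ (hpow n) (hpow n)]
    nlinarith [this, hpow n]
  have hgoodp : ∀ n, Good (p n) := by
    intro n
    apply hdy
    have h1 : t * 2 ^ n ≤ ((2 ^ n : ℕ) : ℝ) := by
      push_cast
      nlinarith [hpow n]
    calc ⌊t * 2 ^ n⌋₊ ≤ ⌊((2 ^ n : ℕ) : ℝ)⌋₊ := Nat.floor_mono h1
      _ = 2 ^ n := Nat.floor_natCast _
  have htendp : Tendsto p atTop (nhds t) := by
    have h0 : Tendsto (fun n : ℕ => t - (1/2:ℝ) ^ n) atTop (nhds t) := by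
      have := tendsto_pow_atTop_nhds_zero_of_lt_one (by norm_num : (0:ℝ) ≤ 1/2) (by norm_num)
      simpa using tendsto_const_nhds.sub this
    exact tendsto_of_tendsto_of_tendsto_of_le_of_le h0 tendsto_const_nhds hplt hple
  refine le_of_forall_pos_le_add ?_
  intro ε hε
  have hev0 : ∀ᶠ s in nhdsWithin t (Icc (0:ℝ) 1), u t - ε < u s :=
    hlsc t ⟨ht0, ht1⟩ _ (by linarith)
  have hevmem : ∀ᶠ n in atTop, 2 * t - p n ∈ Icc (0:ℝ) 1 := by
    have h2t : 2 * t - 1 < t := by linarith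
    filter_upwards [htendp.eventually (eventually_gt_nhds h2t)] with n hn
    have := hple n
    constructor <;> [linarith; linarith]
  have hqt : Tendsto (fun n => 2 * t - p n) atTop (nhds t) := by
    have := (tendsto_const_nhds (x := 2 * t) (f := atTop)).sub htendp
    simpa [two_mul] using this
  have hqt' : Tendsto (fun n => 2 * t - p n) atTop (nhdsWithin t (Icc (0:ℝ) 1)) :=
    tendsto_nhdsWithin_iff.2 ⟨hqt, hevmem⟩
  have hev : ∀ᶠ n in atTop, u t - ε < u (2 * t - p n) := hqt'.eventually hev0
  -- the chain, eventually in n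
  have hchain : ∀ᶠ n in atTop,
      1 / (2 * Real.cosh ((t - p n) * K)) * (B (p n) + (u t - ε)) ≤ u t := by
    filter_upwards [hev, hevmem] with n hn hmem
    obtain ⟨hq0, hq1⟩ := hmem
    obtain ⟨hp0, hp1, hBp⟩ := hgoodp n
    have hab : p n ≤ 2 * t - p n := by have := hple n; linarith
    have hm := hmid (p n) (2 * t - p n) hp0 hab hq1
    rw [hhalf] at hm
    rw [show (p n + (2 * t - p n)) / 2 = t by ring] at hm
    rw [show (2 * t - p n - p n) * K / 2 = (t - p n) * K by ring] at hm
    have hcz : 0 < Real.cosh ((t - p n) * K) := Real.cosh_pos _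
    have hc : (0:ℝ) ≤ 1 / (2 * Real.cosh ((t - p n) * K)) := by positivity
    calc 1 / (2 * Real.cosh ((t - p n) * K)) * (B (p n) + (u t - ε))
        ≤ 1 / (2 * Real.cosh ((t - p n) * K)) * (u (p n) + u (2 * t - p n)) := by
          apply mul_le_mul_of_nonneg_left (by linarith) hc
      _ = 1 / (2 * Real.cosh ((t - p n) * K)) * u (p n)
          + 1 / (2 * Real.cosh ((t - p n) * K)) * u (2 * t - p n) := by ring
      _ ≤ u t := hm
  -- the limit of the left-hand side
  have hBcont : Continuous B := by
    rw [hBdef]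
    exact (((sK_cont K).comp (continuous_const.sub continuous_id)).mul continuous_const).add
      ((sK_cont K).mul continuous_const)
  have hgcont : Continuous (fun x : ℝ =>
      1 / (2 * Real.cosh ((t - x) * K)) * (B x + (u t - ε))) := by
    apply Continuous.mul
    · apply continuous_const.div
      · exact continuous_const.mul
          (Real.continuous_cosh.comp ((continuous_const.sub continuous_id).mul continuous_const))
      · intro x
        have := Real.cosh_pos ((t - x) * K)
        positivity
    · exact hBcont.add continuous_const
  have hlim : Tendsto (fun n =>
      1 / (2 * Real.cosh ((t - p n) * K)) * (B (p n) + (u t - ε))) atTop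
      (nhds (1 / 2 * (B t + (u t - ε)))) := by
    have := (hgcont.tendsto t).comp htendp
    simpa [Real.cosh_zero, Function.comp_def] using this
  have hfin : 1 / 2 * (B t + (u t - ε)) ≤ u t := le_of_tendsto hlim hchain
  have hBt := hfin
  simp only [hBdef] at hBt ⊢
  linarith
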